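/- arXiv:2106.03516 — 5 statements merged into one kernel-verified Lean document; each statement's English description precedes it below -/
import Mathlib

section
/- Let p be prime and s ≥ 1. Let X, A, B, and Y be modules over ℤ/p^s, with X free and p^{s-1}·B = 0. Let f : X → A × B and g : A × B → Y be ℤ/p^s-linear maps. Let i_A : A → A × B be the inclusion a ↦ (a, 0) and π_A : A × B → A the projection. If g ∘ f is injective, then the composite g ∘ i_A ∘ π_A ∘ f : X → Y is also injective. -/
lemma aux_zmod_div (p : ℕ) (hp : p.Prime) (s : ℕ) (hs : 1 ≤ s) (c : ZMod (p ^ s))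
    (hc : (p : ZMod (p ^ s)) ^ (s - 1) * c = 0) :
    (p : ZMod (p ^ s)) * ((c.val / p : ℕ) : ZMod (p ^ s)) = c := by
  haveI : NeZero (p ^ s) := ⟨pow_ne_zero _ hp.pos.ne'⟩
  have h1 : ((p ^ (s - 1) * c.val : ℕ) : ZMod (p ^ s)) = 0 := by
    push_cast
    rw [ZMod.natCast_val, ZMod.cast_id]
    exact hc
  have h2 : p ^ s ∣ p ^ (s - 1) * c.val := (ZMod.natCast_eq_zero_iff _ _).mp h1
  have h3 : p ∣ c.val := by
    obtain ⟨k, hk⟩ := h2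
    have hs' : p ^ s = p ^ (s - 1) * p := by
      rw [← pow_succ]; congr 1; omega
    have : c.val = p * k := by
      have hpos : 0 < p ^ (s - 1) := pow_pos hp.pos _
      apply Nat.eq_of_mul_eq_mul_left hpos
      rw [hk, hs']; ring
    exact ⟨k, this⟩
  have h4 : p * (c.val / p) = c.val := Nat.mul_div_cancel' h3
  calc (p : ZMod (p ^ s)) * ((c.val / p : ℕ) : ZMod (p ^ s))
      = ((p * (c.val / p) : ℕ) : ZMod (p ^ s)) := by push_cast; ring
    _ = ((c.val : ℕ) : ZMod (p ^ s)) := by rw [h4]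
    _ = c := by rw [ZMod.natCast_val, ZMod.cast_id]

/-- Let `X, A, B, Y` be `ℤ/p^s`-modules with `X` free and `p^(s-1) · B = 0`. If
`g ∘ f : X → Y` is injective, then so is `g ∘ i_A ∘ π_A ∘ f`, where `i_A : A → A × B`
is the inclusion and `π_A : A × B → A` the projection. -/
theorem factor_through_first_factor_injective (p : ℕ) (hp : p.Prime) (s : ℕ) (hs : 1 ≤ s)
    (X A B Y : Type) [AddCommGroup X] [AddCommGroup A] [AddCommGroup B] [AddCommGroup Y]
    [Module (ZMod (p ^ s)) X] [Module (ZMod (p ^ s)) A] [Module (ZMod (p ^ s)) B]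
    [Module (ZMod (p ^ s)) Y] [Module.Free (ZMod (p ^ s)) X]
    (hB : ∀ b : B, p ^ (s - 1) • b = 0)
    (f : X →ₗ[ZMod (p ^ s)] A × B) (g : A × B →ₗ[ZMod (p ^ s)] Y)
    (hgf : Function.Injective (g ∘ₗ f)) :
    Function.Injective
      (g ∘ₗ (LinearMap.inl (ZMod (p ^ s)) A B) ∘ₗ (LinearMap.fst (ZMod (p ^ s)) A B) ∘ₗ f) := by
  classical
  set R := ZMod (p ^ s) with hR
  -- p^{s-1} kills B, stated with R-scalars
  have hB' : ∀ b : B, (p : R) ^ (s - 1) • b = 0 := by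
    intro b
    rw [show ((p : R)) ^ (s - 1) = ((p ^ (s - 1) : ℕ) : R) by push_cast; ring,
      Nat.cast_smul_eq_nsmul]
    exact hB b
  -- Key lemma B: if p^{s-1} • g((f y).1, 0) = 0 then p^{s-1} • y = 0
  have key : ∀ y : X, (p : R) ^ (s - 1) • g ((f y).1, 0) = 0 → (p : R) ^ (s - 1) • y = 0 := by
    intro y hy
    apply hgf
    show g (f ((p : R) ^ (s - 1) • y)) = g (f 0)
    rw [map_zero, map_zero, map_smul]
    have hfy : f y = ((f y).1, 0) + (0, (f y).2) := by simp
    rw [hfy, smul_add, map_add, map_smul, hy, zero_add]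
    have h2 : (p : R) ^ (s - 1) • ((0 : A), (f y).2) = ((0 : A), (0 : B)) := by
      rw [Prod.smul_mk, smul_zero, hB']
    rw [h2]
    exact map_zero g
  -- Division by p in a free module
  have hdiv : ∀ y : X, (p : R) ^ (s - 1) • y = 0 → ∃ z, y = (p : R) • z := by
    intro y hy
    let b := Module.Free.chooseBasis R X
    have hcoef : ∀ i, (p : R) ^ (s - 1) * b.repr y i = 0 := by
      intro i
      have h0 : b.repr ((p : R) ^ (s - 1) • y) i = 0 := by rw [hy]; simp
      rw [map_smul] at h0
      simpa using h0
    refine ⟨b.repr.symm ((b.repr y).mapRange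
      (fun c => ((c.val / p : ℕ) : R)) (by simp)), ?_⟩
    apply b.repr.injective
    rw [map_smul, LinearEquiv.apply_symm_apply]
    ext i
    rw [Finsupp.smul_apply, Finsupp.mapRange_apply]
    exact (aux_zmod_div p hp s hs _ (hcoef i)).symm
  rw [injective_iff_map_eq_zero]
  intro x hx
  have hx' : g ((f x).1, 0) = 0 := by
    simpa using hx
  -- Main induction: x ∈ p^j X for j ≤ s-1
  have step : ∀ (n : ℕ) (y : X), n ≤ s - 1 → x = (p : R) ^ n • y → (p : R) ^ (s - 1) • y = 0 := by
    intro n y hn hxy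
    apply key
    have h1 : g ((f x).1, 0) = (p : R) ^ n • g ((f y).1, 0) := by
      rw [hxy, map_smul]
      rw [← map_smul g]
      congr 1
      simp [Prod.smul_mk]
    have h2 : (p : R) ^ n • g ((f y).1, 0) = 0 := h1 ▸ hx'
    calc (p : R) ^ (s - 1) • g ((f y).1, 0)
        = (p : R) ^ (s - 1 - n) • ((p : R) ^ n • g ((f y).1, 0)) := by
          rw [smul_smul, ← pow_add]
          congr 2
          omega
      _ = 0 := by rw [h2, smul_zero]
  have main : ∀ j, j ≤ s - 1 → ∃ y, x = (p : R) ^ j • y := by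
    intro j
    induction j with
    | zero => intro _; exact ⟨x, by simp⟩
    | succ n ih =>
      intro hn
      obtain ⟨y, hy⟩ := ih (by omega)
      have h0 : (p : R) ^ (s - 1) • y = 0 := step n y (by omega) hy
      obtain ⟨z, hz⟩ := hdiv y h0
      exact ⟨z, by rw [hy, hz, smul_smul, ← pow_succ]⟩
  obtain ⟨y, hy⟩ := main (s - 1) le_rfl
  have h0 : (p : R) ^ (s - 1) • y = 0 := step (s - 1) y le_rfl hy
  rw [hy, h0]
end

section
/- Let p be prime and let s ≤ r be positive integers. Let M, M', N be abelian groups (ℤ-modules) with p^r·M = 0 and p^s·N = 0, and let ι : M → M' and φ̃ : M' → N be group homomorphisms such that the composite φ = φ̃ ∘ ι : M → N is surjective. Then Σ_{t=s}^r dim_{ℤ/p^t}(M') ≥ dim_{ℤ/p^s}(N) (as an inequality of cardinals). -/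
/-- The subgroup `M[p] ∩ p^k M` of an abelian group `M`, as a `ℤ`-submodule:
elements killed by `p` that are divisible by `p^k`. -/
noncomputable def pTorsionDiv (p k : ℕ) (M : Type) [AddCommGroup M] : Submodule ℤ M :=
  Submodule.torsionBy ℤ M (p : ℤ) ⊓ LinearMap.range ((p ^ k : ℤ) • (LinearMap.id : M →ₗ[ℤ] M))

/-- The quotient `(M[p] ∩ p^(t-1) M) / (M[p] ∩ p^t M)`. -/
noncomputable abbrev pDimQuot (p t : ℕ) (M : Type) [AddCommGroup M] :=
  pTorsionDiv p (t - 1) M ⧸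
    (Submodule.comap (pTorsionDiv p (t - 1) M).subtype (pTorsionDiv p t M))

lemma pDimQuot_nsmul (p t : ℕ) (M : Type) [AddCommGroup M] (x : pDimQuot p t M) :
    p • x = 0 := by
  obtain ⟨a, rfl⟩ := Submodule.Quotient.mk_surjective _ x
  have ha : (p : ℤ) • (a : M) = 0 := a.2.1
  have h2 : (p : ℤ) • a = 0 := by
    apply Subtype.ext
    simpa using ha
  rw [← natCast_zsmul, ← Submodule.Quotient.mk_smul, h2]
  simp

/-- `dim_{ℤ/p^t}(M)`, the number of `ℤ/p^t` summands of the abelian group `M`, defined as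
the `𝔽_p`-dimension of `(M[p] ∩ p^(t-1) M) / (M[p] ∩ p^t M)`. -/
noncomputable def pDim (p t : ℕ) (M : Type) [AddCommGroup M] : Cardinal :=
  letI : Module (ZMod p) (pDimQuot p t M) :=
    AddCommGroup.zmodModule (pDimQuot_nsmul p t M)
  Module.rank (ZMod p) (pDimQuot p t M)

namespace PDimAux

variable (p : ℕ)

noncomputable def powR (k : ℕ) (M : Type) [AddCommGroup M] : Submodule ℤ M :=
  LinearMap.range ((p ^ k : ℤ) • (LinearMap.id : M →ₗ[ℤ] M))

lemma mem_powR {k : ℕ} {M : Type} [AddCommGroup M] {x : M} :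
    x ∈ powR p k M ↔ ∃ y : M, (p ^ k : ℤ) • y = x := by
  constructor
  · rintro ⟨y, rfl⟩; exact ⟨y, rfl⟩
  · rintro ⟨y, rfl⟩; exact ⟨y, rfl⟩

lemma pTorsionDiv_eq (k : ℕ) (M : Type) [AddCommGroup M] :
    pTorsionDiv p k M = Submodule.torsionBy ℤ M (p : ℤ) ⊓ powR p k M := rfl

variable {M M' N : Type} [AddCommGroup M] [AddCommGroup M'] [AddCommGroup N]

/-- The image of `p^(t-1) ι(M)` in `M' ⧸ p^t M'`. -/
noncomputable def Ysub (t : ℕ) (ι : M →+ M') : Submodule ℤ (M' ⧸ powR p t M') :=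
  (LinearMap.range ((p ^ (t - 1) : ℤ) • ι.toIntLinearMap)).map (powR p t M').mkQ

/-- The image of `M'[p] ∩ p^(t-1) M'` in `M' ⧸ p^t M'`. -/
noncomputable def Dsub (t : ℕ) (M' : Type) [AddCommGroup M'] :
    Submodule ℤ (M' ⧸ powR p t M') :=
  (pTorsionDiv p (t - 1) M').map (powR p t M').mkQ

lemma Ysub_tors (t : ℕ) (ι : M →+ M') : ∀ x : Ysub p t ι, p • x = 0 := by
  rintro ⟨z, hz⟩
  rw [Ysub, Submodule.mem_map] at hz
  obtain ⟨w, hw, rfl⟩ := hz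
  apply Subtype.ext
  show p • (powR p t M').mkQ w = 0
  rw [← map_nsmul, Submodule.mkQ_apply, Submodule.Quotient.mk_eq_zero]
  rcases Nat.eq_zero_or_pos t with ht | ht
  · subst ht
    exact mem_powR p |>.mpr ⟨p • w, by simp⟩
  · obtain ⟨m, rfl⟩ := hw
    refine mem_powR p |>.mpr ⟨ι m, ?_⟩
    show (p ^ t : ℤ) • ι m = p • ((p ^ (t-1) : ℤ) • ι m)
    rw [← natCast_zsmul ((p ^ (t-1) : ℤ) • ι m) p, smul_smul, ← pow_succ',
      Nat.sub_add_cancel ht]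

lemma Dsub_tors (t : ℕ) (M' : Type) [AddCommGroup M'] : ∀ x : Dsub p t M', p • x = 0 := by
  rintro ⟨z, hz⟩
  rw [Dsub, Submodule.mem_map] at hz
  obtain ⟨w, hw, rfl⟩ := hz
  apply Subtype.ext
  show p • (powR p t M').mkQ w = 0
  have hw0 : p • w = 0 := by
    have h1 : (p : ℤ) • w = 0 := hw.1
    rwa [natCast_zsmul] at h1
  rw [← map_nsmul, hw0, map_zero]

noncomputable def rankY (t : ℕ) (ι : M →+ M') : Cardinal :=
  letI := AddCommGroup.zmodModule (Ysub_tors p t ι)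
  Module.rank (ZMod p) (Ysub p t ι)

noncomputable def rankD (t : ℕ) (M' : Type) [AddCommGroup M'] : Cardinal :=
  letI := AddCommGroup.zmodModule (Dsub_tors p t M')
  Module.rank (ZMod p) (Dsub p t M')

section RankLemmas

variable [Fact p.Prime] {A B : Type} [AddCommGroup A] [AddCommGroup B]
  [Module (ZMod p) A] [Module (ZMod p) B]

lemma rank_le_of_surj (f : A →+ B) (hf : Function.Surjective f) :
    Module.rank (ZMod p) B ≤ Module.rank (ZMod p) A :=
  (f.toZModLinearMap p).rank_le_of_surjective hf

lemma rank_le_of_inj (f : A →+ B) (hf : Function.Injective f) :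
    Module.rank (ZMod p) A ≤ Module.rank (ZMod p) B :=
  (f.toZModLinearMap p).rank_le_of_injective hf

lemma rank_le_add (f : A →+ B) {C : Type} [AddCommGroup C] [Module (ZMod p) C]
    (S : AddSubgroup A) (hS : ∀ a, f a = 0 → a ∈ S)
    (h : S →+ C) (hinj : Function.Injective h) :
    Module.rank (ZMod p) A ≤ Module.rank (ZMod p) C + Module.rank (ZMod p) B := by
  have hk := LinearMap.rank_range_add_rank_ker (f.toZModLinearMap p)
  rw [← hk, add_comm]
  refine add_le_add ?_ (Submodule.rank_le _)
  let e : LinearMap.ker (f.toZModLinearMap p) →+ S :=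
    { toFun := fun a => ⟨a.1, hS a.1 ((LinearMap.mem_ker (f := AddMonoidHom.toZModLinearMap p f)).mp a.2)⟩
      map_zero' := Subtype.ext rfl
      map_add' := fun a b => Subtype.ext rfl }
  have he : Function.Injective e := by
    intro a b hab
    have h2 := congrArg Subtype.val hab
    exact Subtype.ext h2
  exact rank_le_of_inj p (h.comp e) (hinj.comp he)

end RankLemmas



lemma rankD_le_pDim [Fact p.Prime] (t : ℕ) (M' : Type) [AddCommGroup M'] :
    rankD p t M' ≤ pDim p t M' := by
  letI := AddCommGroup.zmodModule (Dsub_tors p t M')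
  letI := AddCommGroup.zmodModule (pDimQuot_nsmul p t M')
  have hmem : ∀ c : pTorsionDiv p (t-1) M',
      ((powR p t M').mkQ ∘ₗ (pTorsionDiv p (t-1) M').subtype) c ∈ Dsub p t M' :=
    fun c => Submodule.mem_map_of_mem c.2
  set f1 : pTorsionDiv p (t-1) M' →ₗ[ℤ] Dsub p t M' :=
    LinearMap.codRestrict (Dsub p t M') _ hmem with hf1
  have hker : Submodule.comap (pTorsionDiv p (t-1) M').subtype (pTorsionDiv p t M')
      ≤ LinearMap.ker f1 := by
    intro x hx
    rw [LinearMap.mem_ker]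
    apply Subtype.ext
    show (powR p t M').mkQ x = 0
    rw [Submodule.mkQ_apply, Submodule.Quotient.mk_eq_zero]
    exact hx.2
  set f2 : pDimQuot p t M' →ₗ[ℤ] Dsub p t M' := Submodule.liftQ _ f1 hker with hf2
  have hsurj : Function.Surjective f2 := by
    rintro ⟨z, hz⟩
    rw [Dsub, Submodule.mem_map] at hz
    obtain ⟨w, hw, rfl⟩ := hz
    refine ⟨Submodule.Quotient.mk ⟨w, hw⟩, ?_⟩
    apply Subtype.ext
    rfl
  unfold rankD pDim
  exact rank_le_of_surj p f2.toAddMonoidHom hsurj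

lemma rankY_le_rankD [Fact p.Prime] {r : ℕ} (hr : 1 ≤ r) (ι : M →+ M')
    (hM : ∀ x : M, p ^ r • x = 0) :
    rankY p r ι ≤ rankD p r M' := by
  letI := AddCommGroup.zmodModule (Ysub_tors p r ι)
  letI := AddCommGroup.zmodModule (Dsub_tors p r M')
  have hle : Ysub p r ι ≤ Dsub p r M' := by
    rintro z hz
    rw [Ysub, Submodule.mem_map] at hz
    obtain ⟨w, hw, rfl⟩ := hz
    obtain ⟨m, rfl⟩ := hw
    refine Submodule.mem_map_of_mem (Submodule.mem_inf.mpr ⟨?_, ?_⟩)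
    · rw [Submodule.mem_torsionBy_iff]
      show (p : ℤ) • ((p ^ (r-1) : ℤ) • ι m) = 0
      rw [smul_smul, ← pow_succ', Nat.sub_add_cancel hr]
      have h0 : ((p : ℤ))^r • m = 0 := by
        have h1 := hM m
        rw [← natCast_zsmul m (p^r)] at h1
        push_cast at h1
        exact h1
      calc ((p : ℤ))^r • ι m = ι (((p : ℤ))^r • m) := (map_zsmul ι _ _).symm
        _ = 0 := by rw [h0, map_zero]
    · exact mem_powR p |>.mpr ⟨ι m, rfl⟩
  unfold rankY rankD
  exact rank_le_of_inj p (Submodule.inclusion hle).toAddMonoidHom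
    (Submodule.inclusion_injective hle)

/-- multiplication by `p` from `M'/p^t M'` to `M'/p^(t+1) M'` -/
noncomputable def lam (t : ℕ) (M' : Type) [AddCommGroup M'] :
    (M' ⧸ powR p t M') →ₗ[ℤ] (M' ⧸ powR p (t+1) M') :=
  Submodule.mapQ _ _ ((p : ℤ) • (LinearMap.id : M' →ₗ[ℤ] M'))
    (by
      rintro x ⟨y, rfl⟩
      refine mem_powR p |>.mpr ⟨y, ?_⟩
      show (p ^ (t+1) : ℤ) • y = (p : ℤ) • ((p ^ t : ℤ) • y)
      rw [smul_smul, ← pow_succ'])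

lemma rankY_step [Fact p.Prime] {t : ℕ} (ht : 1 ≤ t) (ι : M →+ M') :
    rankY p t ι ≤ rankD p t M' + rankY p (t+1) ι := by
  letI := AddCommGroup.zmodModule (Ysub_tors p t ι)
  letI := AddCommGroup.zmodModule (Ysub_tors p (t+1) ι)
  letI := AddCommGroup.zmodModule (Dsub_tors p t M')
  set nu : Ysub p t ι →ₗ[ℤ] (M' ⧸ powR p (t+1) M') :=
    (lam p t M') ∘ₗ (Ysub p t ι).subtype with hnu
  have hrange : ∀ a : Ysub p t ι, nu a ∈ Ysub p (t+1) ι := by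
    rintro ⟨z, hz⟩
    rw [Ysub, Submodule.mem_map] at hz
    obtain ⟨w, hw, rfl⟩ := hz
    obtain ⟨m, rfl⟩ := hw
    show lam p t M' ((powR p t M').mkQ _) ∈ _
    rw [Submodule.mkQ_apply, lam, Submodule.mapQ_apply]
    refine Submodule.mem_map_of_mem ⟨m, ?_⟩
    show (p ^ ((t+1) - 1) : ℤ) • ι m = (p : ℤ) • ((p ^ (t-1) : ℤ) • ι m)
    rw [smul_smul, ← pow_succ', Nat.sub_add_cancel ht, Nat.add_sub_cancel]
  set mu : Ysub p t ι →ₗ[ℤ] Ysub p (t+1) ι :=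
    LinearMap.codRestrict _ nu hrange with hmu
  set S : AddSubgroup (Ysub p t ι) :=
    AddSubgroup.comap (Ysub p t ι).subtype.toAddMonoidHom
      (Dsub p t M').toAddSubgroup with hS
  have hSmem : ∀ a : Ysub p t ι, (a : M' ⧸ powR p t M') ∈ Dsub p t M' → a ∈ S := by
    intro a ha
    exact ha
  have hker : ∀ a, mu.toAddMonoidHom a = 0 → a ∈ S := by
    rintro ⟨z, hz⟩ hmu0
    have hnu0 : nu ⟨z, hz⟩ = 0 := congrArg Subtype.val hmu0
    rw [Ysub, Submodule.mem_map] at hz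
    obtain ⟨w, hw, rfl⟩ := hz
    obtain ⟨m, hm⟩ := hw
    have hm' : w = (p ^ (t-1) : ℤ) • ι m := hm.symm
    have h1 : (p : ℤ) • w ∈ powR p (t+1) M' := by
      have : lam p t M' ((powR p t M').mkQ w) = 0 := hnu0
      rw [Submodule.mkQ_apply, lam, Submodule.mapQ_apply] at this
      rw [← Submodule.Quotient.mk_eq_zero]
      exact this
    obtain ⟨u, hu⟩ := mem_powR p |>.mp h1
    apply hSmem
    rw [Dsub, Submodule.mem_map]
    refine ⟨w - (p ^ t : ℤ) • u, Submodule.mem_inf.mpr ⟨?_, ?_⟩, ?_⟩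
    · rw [Submodule.mem_torsionBy_iff, smul_sub, smul_smul, ← pow_succ', hu, sub_self]
    · refine mem_powR p |>.mpr ⟨ι m - (p : ℤ) • u, ?_⟩
      rw [smul_sub, ← hm', smul_smul, ← pow_succ, Nat.sub_add_cancel ht]
    · show (powR p t M').mkQ _ = _
      rw [map_sub]
      have : (powR p t M').mkQ ((p ^ t : ℤ) • u) = 0 := by
        rw [Submodule.mkQ_apply, Submodule.Quotient.mk_eq_zero]
        exact mem_powR p |>.mpr ⟨u, rfl⟩
      rw [this, sub_zero]
  let g : S →+ Dsub p t M' :=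
    { toFun := fun a => ⟨((a : Ysub p t ι) : M' ⧸ powR p t M'), a.2⟩
      map_zero' := by apply Subtype.ext; rfl
      map_add' := by intro a b; apply Subtype.ext; rfl }
  have hg : Function.Injective g := by
    intro a b hab
    have h2 := congrArg Subtype.val hab
    exact Subtype.ext (Subtype.ext h2)
  unfold rankY rankD
  exact rank_le_add p mu.toAddMonoidHom S hker g hg

lemma pDim_le_rankY [Fact p.Prime] {s : ℕ} (hs : 1 ≤ s)
    (ι : M →+ M') (φt : M' →+ N)
    (hN : ∀ x : N, p ^ s • x = 0)
    (hsurj : Function.Surjective (φt.comp ι)) :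
    pDim p s N ≤ rankY p s ι := by
  letI := AddCommGroup.zmodModule (Ysub_tors p s ι)
  letI := AddCommGroup.zmodModule (pDimQuot_nsmul p s N)
  have hNz : ∀ x : N, (p ^ s : ℤ) • x = 0 := by
    intro x
    have h1 := hN x
    rw [← natCast_zsmul x (p^s)] at h1
    push_cast at h1
    exact h1
  have hker : powR p s M' ≤ LinearMap.ker φt.toIntLinearMap := by
    rintro x ⟨y, rfl⟩
    show φt ((p ^ s : ℤ) • y) = 0
    rw [map_zsmul]
    exact hNz (φt y)
  set phibar : (M' ⧸ powR p s M') →ₗ[ℤ] N :=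
    Submodule.liftQ _ φt.toIntLinearMap hker with hphibar
  have hmem : ∀ a : Ysub p s ι,
      (phibar ∘ₗ (Ysub p s ι).subtype) a ∈ pTorsionDiv p (s-1) N := by
    rintro ⟨z, hz⟩
    rw [Ysub, Submodule.mem_map] at hz
    obtain ⟨w, hw, rfl⟩ := hz
    obtain ⟨m, rfl⟩ := hw
    show phibar ((powR p s M').mkQ _) ∈ _
    rw [Submodule.mkQ_apply, hphibar, Submodule.liftQ_apply]
    have hval : φt.toIntLinearMap (((p ^ (s-1) : ℤ) • ι.toIntLinearMap) m)
        = (p ^ (s-1) : ℤ) • φt (ι m) := by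
      show φt ((p ^ (s-1) : ℤ) • ι m) = _
      rw [map_zsmul]
    rw [hval]
    refine Submodule.mem_inf.mpr ⟨?_, ?_⟩
    · rw [Submodule.mem_torsionBy_iff, smul_smul, ← pow_succ', Nat.sub_add_cancel hs]
      exact hNz (φt (ι m))
    · exact mem_powR p |>.mpr ⟨φt (ι m), rfl⟩
  set h1 : Ysub p s ι →ₗ[ℤ] pTorsionDiv p (s-1) N :=
    LinearMap.codRestrict _ _ hmem with hh1
  set h2 : Ysub p s ι →ₗ[ℤ] pDimQuot p s N :=
    (Submodule.mkQ _) ∘ₗ h1 with hh2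
  have hsurj2 : Function.Surjective h2 := by
    intro q
    obtain ⟨y, rfl⟩ := Submodule.Quotient.mk_surjective _ q
    obtain ⟨n, hn⟩ := mem_powR p |>.mp y.2.2
    obtain ⟨m, hm⟩ := hsurj n
    refine ⟨⟨(powR p s M').mkQ ((p ^ (s-1) : ℤ) • ι m),
      Submodule.mem_map_of_mem ⟨m, rfl⟩⟩, ?_⟩
    show Submodule.Quotient.mk (h1 _) = Submodule.Quotient.mk y
    apply congrArg
    apply Subtype.ext
    show φt ((p ^ (s-1) : ℤ) • ι m) = (y : N)
    have hm' : φt (ι m) = n := hm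
    rw [map_zsmul, hm', hn]
  unfold pDim rankY
  exact rank_le_of_surj p h2.toAddMonoidHom hsurj2

lemma rankY_chain [Fact p.Prime] {r : ℕ} (hr : 1 ≤ r) (ι : M →+ M')
    (hM : ∀ x : M, p ^ r • x = 0) :
    ∀ k t, 1 ≤ t → t + k = r → rankY p t ι ≤ ∑ u ∈ Finset.Icc t r, pDim p u M' := by
  intro k
  induction k with
  | zero =>
    intro t ht htr
    rw [Nat.add_zero] at htr
    subst htr
    rw [Finset.Icc_self, Finset.sum_singleton]
    exact le_trans (rankY_le_rankD p hr ι hM) (rankD_le_pDim p t M')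
  | succ k ih =>
    intro t ht htr
    have htr' : t + 1 + k = r := by omega
    have hsplit : Finset.Icc t r = insert t (Finset.Icc (t+1) r) := by
      ext a
      simp only [Finset.mem_Icc, Finset.mem_insert]
      omega
    rw [hsplit, Finset.sum_insert (by simp)]
    calc rankY p t ι ≤ rankD p t M' + rankY p (t+1) ι := rankY_step p ht ι
      _ ≤ pDim p t M' + ∑ u ∈ Finset.Icc (t+1) r, pDim p u M' :=
        add_le_add (rankD_le_pDim p t M') (ih (t+1) (by omega) htr')

end PDimAux

/-- If `p^r M = 0`, `p^s N = 0` with `s ≤ r`, and a surjection `φ : M → N` factors as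
`φ = φ̃ ∘ ι` through `M'`, then `∑_{t=s}^r dim_{ℤ/p^t}(M') ≥ dim_{ℤ/p^s}(N)`. -/
theorem sum_pDim_ge_of_factored_surjection (p : ℕ) (hp : p.Prime) (s r : ℕ)
    (hs : 1 ≤ s) (hsr : s ≤ r)
    (M M' N : Type) [AddCommGroup M] [AddCommGroup M'] [AddCommGroup N]
    (hM : ∀ x : M, p ^ r • x = 0) (hN : ∀ x : N, p ^ s • x = 0)
    (ι : M →+ M') (φt : M' →+ N)
    (hsurj : Function.Surjective (φt.comp ι)) :
    pDim p s N ≤ ∑ t ∈ Finset.Icc s r, pDim p t M' := by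
  haveI : Fact p.Prime := ⟨hp⟩
  have hr : 1 ≤ r := le_trans hs hsr
  refine le_trans (PDimAux.pDim_le_rankY p hs ι φt hN hsurj) ?_
  exact PDimAux.rankY_chain p hr ι hM (r - s) s hs (by omega)
end

section
/- Let p be prime and s ≥ 1, and let φ : M → N be a ℤ/p^s-linear map of finitely generated ℤ/p^s-modules with N free over ℤ/p^s. Then dim_{ℤ/p^s}(Im(φ)) equals the 𝔽_p-dimension of the image of the induced map φ ⊗ id : M ⊗_{ℤ/p^s} ℤ/p → N ⊗_{ℤ/p^s} ℤ/p, where ℤ/p is regarded as a ℤ/p^s-module via the natural surjection ℤ/p^s → ℤ/p (the image being an 𝔽_p-vector space). -/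
open TensorProduct

lemma zmod_rank_congr {q : ℕ} [NeZero q] {A B : Type} [AddCommGroup A] [AddCommGroup B]
    [Module (ZMod q) A] [Module (ZMod q) B] (e : A ≃+ B) :
    Module.rank (ZMod q) A = Module.rank (ZMod q) B := by
  refine LinearEquiv.rank_eq (e.toLinearEquiv ?_)
  intro c x
  rw [← ZMod.natCast_zmod_val c, Nat.cast_smul_eq_nsmul, Nat.cast_smul_eq_nsmul, map_nsmul]


/-- Let `φ : M → N` be a `ℤ/p^s`-linear map of finitely generated `ℤ/p^s`-modules with `N`
free. Regarding `ℤ/p` as a `ℤ/p^s`-algebra via the natural surjection, the `ℤ/p^s`-dimension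
of `Im(φ)` equals the `𝔽_p`-dimension of the image of `φ ⊗ id : M ⊗ ℤ/p → N ⊗ ℤ/p`. -/
theorem pDim_range_eq_rank_range_baseChange (p : ℕ) (hp : p.Prime) (s : ℕ) (hs : 1 ≤ s)
    (M N : Type) [AddCommGroup M] [AddCommGroup N]
    [Module (ZMod (p ^ s)) M] [Module (ZMod (p ^ s)) N]
    [Module.Finite (ZMod (p ^ s)) M] [Module.Finite (ZMod (p ^ s)) N]
    [Module.Free (ZMod (p ^ s)) N]
    [instA : Algebra (ZMod (p ^ s)) (ZMod p)]
    (hA : algebraMap (ZMod (p ^ s)) (ZMod p) =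
      ZMod.castHom (dvd_pow_self p (Nat.one_le_iff_ne_zero.mp hs)) (ZMod p))
    (φ : M →ₗ[ZMod (p ^ s)] N) :
    pDim p s (LinearMap.range φ) =
      Module.rank (ZMod p) (LinearMap.range (LinearMap.baseChange (ZMod p) φ)) := by
  haveI : Fact p.Prime := ⟨hp⟩
  haveI : NeZero p := ⟨hp.ne_zero⟩
  haveI : NeZero (p ^ s) := ⟨pow_ne_zero s hp.ne_zero⟩
  set R := ZMod (p ^ s) with hR
  -- basic power facts
  have hps : (p : R) ^ (s - 1) * (p : R) = 0 := by
    rw [← pow_succ, Nat.sub_add_cancel hs, ← Nat.cast_pow, ZMod.natCast_self]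
  -- the additive hom ℤ →+ R, x ↦ x * p^(s-1)
  set g : ℤ →+ R := (AddMonoidHom.mulRight ((p : R) ^ (s - 1))).comp (Int.castAddHom R) with hgdef
  have hgapp : ∀ x : ℤ, g x = (x : R) * (p : R) ^ (s - 1) := fun x => rfl
  have hg : g p = 0 := by
    rw [hgapp]; push_cast; rw [mul_comm]; exact hps
  set e₀ : ZMod p →+ R := ZMod.lift p ⟨g, hg⟩ with he₀def
  set cH := ZMod.castHom (dvd_pow_self p (Nat.one_le_iff_ne_zero.mp hs)) (ZMod p) with hcH
  have he : ∀ r : R, e₀ (cH r) = r * (p : R) ^ (s - 1) := by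
    intro r
    obtain ⟨n, rfl⟩ := ZMod.natCast_zmod_surjective r
    rw [map_natCast, ← Int.cast_natCast, he₀def, ZMod.lift_coe]
    rw [hgapp]; push_cast; ring
  have he₀inj : Function.Injective e₀ := by
    rw [injective_iff_map_eq_zero]
    intro c hc
    obtain ⟨n, rfl⟩ := ZMod.natCast_zmod_surjective c
    rw [← map_natCast cH, he] at hc
    rw [show ((n : R) * (p:R)^(s-1)) = ((n * p ^ (s-1) : ℕ) : R) by rw [Nat.cast_mul, Nat.cast_pow]] at hc
    rw [ZMod.natCast_eq_zero_iff] at hc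
    have hdvd : p ∣ n := by
      have h1 : p ^ (s-1) * p ∣ p ^ (s-1) * n := by
        rw [mul_comm (p ^ (s-1)) n]
        calc p ^ (s-1) * p = p ^ s := by rw [← pow_succ, Nat.sub_add_cancel hs]
          _ ∣ n * p ^ (s-1) := hc
      exact (Nat.mul_dvd_mul_iff_left (Nat.pow_pos (n := s-1) hp.pos)).mp h1
    rw [ZMod.natCast_eq_zero_iff]
    exact hdvd
  -- e' as an R-linear map
  have hsmulF : ∀ (r : R) (c : ZMod p), r • c = cH r * c := by
    intro r c
    rw [Algebra.smul_def, hA]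
  have hsm : ∀ (r : R) (c : ZMod p), e₀ (r • c) = r * e₀ c := by
    intro r c
    obtain ⟨n, rfl⟩ := ZMod.natCast_zmod_surjective c
    rw [hsmulF, ← map_natCast cH (R := R) n, ← map_mul, he, he]
    ring
  set e' : ZMod p →ₗ[R] R :=
    { toFun := e₀
      map_add' := e₀.map_add
      map_smul' := by
        intro r c
        simp only [RingHom.id_apply, smul_eq_mul]
        exact hsm r c } with he'def
  set β : (ZMod p) ⊗[R] N →ₗ[R] N :=
    (TensorProduct.lid R N).toLinearMap ∘ₗ LinearMap.rTensor N e' with hβdef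
  have hβinj : Function.Injective β := by
    refine (TensorProduct.lid R N).injective.comp ?_
    exact Module.Flat.rTensor_preserves_injective_linearMap e' he₀inj
  have hβtmul : ∀ (c : ZMod p) (n : N), β (c ⊗ₜ[R] n) = e₀ c • n := by
    intro c n
    simp [hβdef, he'def]
  set ψ : (ZMod p) ⊗[R] M →ₗ[R] N :=
    β ∘ₗ (LinearMap.baseChange (ZMod p) φ).restrictScalars R with hψdef
  have hψtmul : ∀ (c : ZMod p) (m : M), ψ (c ⊗ₜ[R] m) = e₀ c • φ m := by
    intro c m
    rw [hψdef]
    simp only [LinearMap.coe_comp, Function.comp_apply, LinearMap.coe_restrictScalars,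
      LinearMap.baseChange_tmul]
    exact hβtmul c (φ m)
  set K := LinearMap.range φ with hK
  set K' := Submodule.map ((p : R) ^ (s - 1) • (LinearMap.id : N →ₗ[R] N)) K with hK'
  have hrange : LinearMap.range ψ = K' := by
    apply le_antisymm
    · rw [LinearMap.range_eq_map, ← TensorProduct.span_tmul_eq_top, Submodule.map_span,
        Submodule.span_le]
      rintro _ ⟨_, ⟨c, m, rfl⟩, rfl⟩
      obtain ⟨n, rfl⟩ := ZMod.natCast_zmod_surjective c
      rw [hψtmul, ← map_natCast cH (R := R) n, he, mul_comm, mul_smul]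
      exact ⟨(n : R) • φ m, Submodule.smul_mem K _ (LinearMap.mem_range_self φ m), by
        simp [smul_comm ((n : R)) ((p : R) ^ (s - 1))]⟩
    · rintro x ⟨y, ⟨m, rfl⟩, rfl⟩
      refine ⟨(1 : ZMod p) ⊗ₜ[R] m, ?_⟩
      rw [hψtmul, ← map_one cH, he, one_mul]
      simp
  -- LHS identifications
  have hcast : ∀ (k : ℕ) (x : ↥K), ((p : ℤ) ^ k) • x = ((p : R) ^ k) • x := by
    intro k x
    have h : (((p : ℤ) ^ k : ℤ) : R) = (p : R) ^ k := by push_cast; ring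
    rw [← Int.cast_smul_eq_zsmul R, h]
  have hT2 : pTorsionDiv p s ↥K = ⊥ := by
    rw [Submodule.eq_bot_iff]
    intro x hx
    obtain ⟨y, rfl⟩ := hx.2
    simp only [LinearMap.smul_apply, LinearMap.id_apply]
    rw [hcast s y, show ((p : R) ^ s) = 0 by rw [← Nat.cast_pow, ZMod.natCast_self], zero_smul]
  set Rng : Submodule ℤ ↥K :=
    LinearMap.range (((p : ℤ) ^ (s - 1)) • (LinearMap.id : ↥K →ₗ[ℤ] ↥K)) with hRng
  have hT1 : pTorsionDiv p (s - 1) ↥K = Rng := by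
    unfold pTorsionDiv
    apply inf_eq_right.mpr
    rintro x ⟨y, rfl⟩
    rw [Submodule.mem_torsionBy_iff]
    simp only [LinearMap.smul_apply, LinearMap.id_apply]
    rw [smul_smul, show ((p : ℤ) * (p : ℤ) ^ (s - 1)) = (p : ℤ) ^ s by
      rw [← pow_succ', Nat.sub_add_cancel hs]]
    rw [hcast s y, show ((p : R) ^ s) = 0 by rw [← Nat.cast_pow, ZMod.natCast_self], zero_smul]
  have hbot : Submodule.comap (pTorsionDiv p (s - 1) ↥K).subtype (pTorsionDiv p s ↥K) = ⊥ := by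
    rw [hT2, Submodule.comap_bot, Submodule.ker_subtype]
  have E1 : pDimQuot p s ↥K ≃+ ↥(pTorsionDiv p (s - 1) ↥K) :=
    (Submodule.quotEquivOfEqBot _ hbot).toAddEquiv
  have E2 : (↥(pTorsionDiv p (s - 1) ↥K)) ≃+ ↥Rng := (LinearEquiv.ofEq _ _ hT1).toAddEquiv
  have hval : ∀ y : ↥K, ((((p : ℤ) ^ (s - 1)) • y : ↥K) : N) = (p : R) ^ (s - 1) • (y : N) := by
    intro y
    rw [hcast (s - 1) y]
    rfl
  have hmem : ∀ y : ↥K, ((((p : ℤ) ^ (s - 1)) • y : ↥K) : N) ∈ K' := by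
    intro y
    rw [hval]
    exact ⟨(y : N), y.2, rfl⟩
  have hRngmem : ∀ x : ↥Rng, ((x : ↥K) : N) ∈ K' := by
    rintro ⟨x, y, rfl⟩
    exact hmem y
  have E3 : ↥Rng ≃+ ↥K' := by
    refine AddEquiv.ofBijective
      ({ toFun := fun x => ⟨((x : ↥K) : N), hRngmem x⟩
         map_zero' := Subtype.ext rfl
         map_add' := fun a b => Subtype.ext rfl } : ↥Rng →+ ↥K') ⟨?_, ?_⟩
    · intro a b h
      have h1 : ((a : ↥K) : N) = ((b : ↥K) : N) := congrArg (Subtype.val : ↥K' → N) h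
      exact Subtype.ext (Subtype.ext h1)
    · rintro ⟨n, hn⟩
      rw [Submodule.mem_map] at hn
      obtain ⟨k, hkK, rfl⟩ := hn
      refine ⟨⟨((p : ℤ) ^ (s - 1)) • (⟨k, hkK⟩ : ↥K), ⟨⟨k, hkK⟩, rfl⟩⟩, Subtype.ext ?_⟩
      show ((((p : ℤ) ^ (s - 1)) • (⟨k, hkK⟩ : ↥K) : ↥K) : N) = _
      rw [hval]
      rfl
  have hK'mem : ∀ x : ↥(LinearMap.range (LinearMap.baseChange (ZMod p) φ)),
      β (x : ZMod p ⊗[R] N) ∈ K' := by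
    rintro ⟨x, y, rfl⟩
    rw [← hrange]
    exact ⟨y, rfl⟩
  have E4 : ↥(LinearMap.range (LinearMap.baseChange (ZMod p) φ)) ≃+ ↥K' := by
    refine AddEquiv.ofBijective
      ({ toFun := fun x => ⟨β (x : ZMod p ⊗[R] N), hK'mem x⟩
         map_zero' := Subtype.ext (by simp)
         map_add' := fun a b => Subtype.ext (by simp) } :
         ↥(LinearMap.range (LinearMap.baseChange (ZMod p) φ)) →+ ↥K') ⟨?_, ?_⟩
    · intro a b h
      exact Subtype.ext (hβinj (congrArg Subtype.val h))
    · rintro ⟨n, hn⟩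
      rw [← hrange] at hn
      obtain ⟨y, rfl⟩ := hn
      exact ⟨⟨LinearMap.baseChange (ZMod p) φ y, LinearMap.mem_range_self _ y⟩, Subtype.ext rfl⟩
  unfold pDim
  exact @zmod_rank_congr p _ _ _ _ _ (AddCommGroup.zmodModule (pDimQuot_nsmul p s ↥K)) _
    (((E1.trans E2).trans E3).trans E4.symm)
end

section
/- Let p be prime and let t < s be positive integers. Let φ : M → N be a ℤ/p^s-linear map of ℤ/p^s-modules with M free over ℤ/p^s, and regard ℤ/p^t as a ℤ/p^s-module via the natural surjection ℤ/p^s → ℤ/p^t. If φ is injective, then the induced map φ ⊗ id : M ⊗_{ℤ/p^s} ℤ/p^t → N ⊗_{ℤ/p^s} ℤ/p^t is injective. -/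
/-- In `ZMod n`, if every annihilator of `a` annihilates `c`, then `c` is a multiple of `a`.
This is the key scalar fact behind the self-injectivity of `ZMod n`. -/
lemma zmod_dvd_of_ann (n : ℕ) [NeZero n] (a c : ZMod n)
    (h : ∀ r : ZMod n, r * a = 0 → r * c = 0) : ∃ y : ZMod n, a * y = c := by
  have hn : 0 < n := Nat.pos_of_ne_zero (NeZero.ne n)
  set A := a.val with hA
  set C := c.val with hC
  set d := Nat.gcd A n with hd
  have hdn : d ∣ n := Nat.gcd_dvd_right A n
  have hdA : d ∣ A := Nat.gcd_dvd_left A n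
  have hdpos : 0 < d := Nat.gcd_pos_of_pos_right _ hn
  set r := n / d with hr
  have hrd : r * d = n := Nat.div_mul_cancel hdn
  have hrpos : 0 < r := Nat.div_pos (Nat.le_of_dvd hn hdn) hdpos
  -- `r * a = 0` in `ZMod n`
  have hra : (r : ZMod n) * a = 0 := by
    have hdvd : n ∣ r * A := by
      obtain ⟨A', hA'⟩ := hdA
      exact ⟨A', by rw [hA', ← mul_assoc, hrd]⟩
    have : ((r * A : ℕ) : ZMod n) = 0 := (ZMod.natCast_eq_zero_iff _ _).mpr hdvd
    rwa [Nat.cast_mul, ZMod.natCast_val, ZMod.cast_id] at this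
  have hrc := h _ hra
  -- hence `d ∣ C`
  have hdC : d ∣ C := by
    have : ((r * C : ℕ) : ZMod n) = 0 := by
      rw [Nat.cast_mul, ZMod.natCast_val, ZMod.cast_id]; exact hrc
    have hnd : n ∣ r * C := (ZMod.natCast_eq_zero_iff _ _).mp this
    obtain ⟨k, hk⟩ := hnd
    refine ⟨k, ?_⟩
    have : r * C = r * (d * k) := by rw [hk, ← hrd]; ring
    exact Nat.eq_of_mul_eq_mul_left hrpos this
  -- Bezout: `(d : ZMod n) = a * gcdA`
  have bez : (d : ZMod n) = a * ((Nat.gcdA A n : ℤ) : ZMod n) := by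
    have := Nat.gcd_eq_gcd_ab A n
    have h2 : ((d : ℤ) : ZMod n)
        = ((A : ℤ) : ZMod n) * ((Nat.gcdA A n : ℤ) : ZMod n)
          + ((n : ℤ) : ZMod n) * ((Nat.gcdB A n : ℤ) : ZMod n) := by
      rw [← Int.cast_mul, ← Int.cast_mul, ← Int.cast_add, ← this]
    simp only [Int.cast_natCast, ZMod.natCast_self, zero_mul, add_zero] at h2
    rw [ZMod.natCast_val, ZMod.cast_id] at h2
    exact_mod_cast h2
  refine ⟨((Nat.gcdA A n : ℤ) : ZMod n) * ((C / d : ℕ) : ZMod n), ?_⟩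
  have : a * (((Nat.gcdA A n : ℤ) : ZMod n) * ((C / d : ℕ) : ZMod n))
      = (d : ZMod n) * ((C / d : ℕ) : ZMod n) := by rw [bez]; ring
  rw [this, ← Nat.cast_mul, Nat.mul_div_cancel' hdC, ZMod.natCast_val, ZMod.cast_id]

/-- A free module over `ZMod n` satisfies Baer's criterion. -/
lemma baer_of_free (n : ℕ) [NeZero n] (M : Type) [AddCommGroup M] [Module (ZMod n) M]
    [Module.Free (ZMod n) M] : Module.Baer (ZMod n) M := by
  intro I g
  have hpir : IsPrincipalIdealRing (ZMod n) :=
    IsPrincipalIdealRing.of_surjective (Int.castRingHom (ZMod n)) ZMod.intCast_surjective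
  obtain ⟨a, ha⟩ := (hpir.principal I).principal
  subst ha
  have hamem : a ∈ Ideal.span {a} := Ideal.mem_span_singleton_self a
  set m : M := g ⟨a, hamem⟩ with hm
  let b := Module.Free.chooseBasis (ZMod n) M
  -- annihilator condition on each coordinate
  have hann : ∀ i, ∀ r : ZMod n, r * a = 0 → r * (b.repr m i) = 0 := by
    intro i r hra
    have : r • m = 0 := by
      rw [hm, ← map_smul]
      have : r • (⟨a, hamem⟩ : Ideal.span {a}) = 0 := by
        ext; simpa using hra
      rw [this, map_zero]
    calc r * b.repr m i = b.repr (r • m) i := by rw [map_smul]; rfl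
      _ = 0 := by rw [this, map_zero]; rfl
  classical
  -- choose a preimage coordinatewise
  let F : Module.Free.ChooseBasisIndex (ZMod n) M →₀ ZMod n :=
    Finsupp.onFinset (b.repr m).support
      (fun i => if h : b.repr m i = 0 then 0
        else Classical.choose (zmod_dvd_of_ann n a (b.repr m i) (hann i)))
      (by intro i hi; by_contra hc
          simp only [Finsupp.notMem_support_iff] at hc
          simp [hc] at hi)
  set m' : M := b.repr.symm F with hm'
  have ham' : a • m' = m := by
    apply b.repr.injective
    ext i
    rw [map_smul, hm', LinearEquiv.apply_symm_apply]
    show a * F i = b.repr m i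
    by_cases h : b.repr m i = 0
    · simp [F, h, Finsupp.onFinset_apply]
    · simp only [F, Finsupp.onFinset_apply, dif_neg h]
      exact Classical.choose_spec (zmod_dvd_of_ann n a (b.repr m i) (hann i))
  refine ⟨LinearMap.toSpanSingleton (ZMod n) M m', ?_⟩
  intro x hx
  obtain ⟨r, hr⟩ := Ideal.mem_span_singleton'.mp hx
  have hsub : (⟨x, hx⟩ : Ideal.span {a}) = r • ⟨a, hamem⟩ := by
    ext; simpa using hr.symm
  rw [hsub, map_smul, ← hm]
  show x • m' = r • m
  rw [← hr, mul_smul, ham']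

/-- Let `t < s` and let `φ : M → N` be an injective `ℤ/p^s`-linear map with `M` free over
`ℤ/p^s`. Regarding `ℤ/p^t` as a `ℤ/p^s`-algebra via the natural surjection
`ℤ/p^s → ℤ/p^t`, the induced map `φ ⊗ id : M ⊗ ℤ/p^t → N ⊗ ℤ/p^t` is injective. -/
theorem baseChange_injective_of_injective (p : ℕ) (hp : p.Prime) (t s : ℕ)
    (ht : 1 ≤ t) (hts : t < s)
    (M N : Type) [AddCommGroup M] [AddCommGroup N]
    [Module (ZMod (p ^ s)) M] [Module (ZMod (p ^ s)) N]
    [Module.Free (ZMod (p ^ s)) M]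
    [instA : Algebra (ZMod (p ^ s)) (ZMod (p ^ t))]
    (hA : algebraMap (ZMod (p ^ s)) (ZMod (p ^ t)) =
      ZMod.castHom (pow_dvd_pow p hts.le) (ZMod (p ^ t)))
    (φ : M →ₗ[ZMod (p ^ s)] N) (hφ : Function.Injective φ) :
    Function.Injective (LinearMap.baseChange (ZMod (p ^ t)) φ) := by
  have hps : NeZero (p ^ s) := ⟨pow_ne_zero s hp.ne_zero⟩
  have baer : Module.Baer (ZMod (p ^ s)) M := baer_of_free (p ^ s) M
  obtain ⟨ψ, hψ⟩ := baer.extension_property φ hφ LinearMap.id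
  have : (LinearMap.baseChange (ZMod (p ^ t)) ψ) ∘ₗ (LinearMap.baseChange (ZMod (p ^ t)) φ)
      = LinearMap.id := by
    rw [← LinearMap.baseChange_comp, hψ, LinearMap.baseChange_id]
  intro x y hxy
  have hx := LinearMap.congr_fun this x
  have hy := LinearMap.congr_fun this y
  rw [LinearMap.comp_apply] at hx hy
  rw [hxy] at hx
  simpa using hx.symm.trans hy
end

section
/- Let p be prime and s ≥ 1, and let A and B be modules over R = ℤ/p^s with A free. Let f : T(A) → T(B) be an R-linear map (not necessarily an algebra map) between the tensor algebras. Suppose that for every k ∈ ℕ and every x in the weight-k component 𝒜_k of T(A): (i) p^{s-1}·π_j(f(x)) = 0 for every j < k, and (ii) the map from 𝒜_k of T(A) to the weight-k component of T(B) given by x ↦ π_k(f(x)) is injective. Then f is injective. -/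
/-- In `ZMod n` with `n = c * d`, if `c * a = 0` then `a` is divisible by `d`. -/
lemma zmod_exists_of_mul_eq_zero {n c d : ℕ} [NeZero n] (hn : n = c * d) (hc : 0 < c)
    (a : ZMod n) (h : (c : ZMod n) * a = 0) : ∃ b : ZMod n, a = (d : ZMod n) * b := by
  have hval : (a.val : ZMod n) = a := ZMod.natCast_zmod_val a
  have h2 : ((c * a.val : ℕ) : ZMod n) = 0 := by push_cast [hval]; exact h
  rw [ZMod.natCast_eq_zero_iff] at h2
  have h3 : c * d ∣ c * a.val := by rw [← hn]; exact h2
  have hd : d ∣ a.val := (mul_dvd_mul_iff_left hc.ne').mp h3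
  refine ⟨((a.val / d : ℕ) : ZMod n), ?_⟩
  rw [← Nat.cast_mul, Nat.mul_div_cancel' hd, hval]

/-- In a free module over `ZMod n` with `n = c * d`, if `c • x = 0` then `x = d • z`. -/
lemma free_exists_of_smul_eq_zero {n c d : ℕ} [NeZero n] {M : Type*} [AddCommGroup M]
    [Module (ZMod n) M] [Module.Free (ZMod n) M] (hn : n = c * d) (hc : 0 < c)
    (x : M) (h : c • x = 0) : ∃ z : M, x = d • z := by
  classical
  let B := Module.Free.chooseBasis (ZMod n) M
  have h' : (c : ZMod n) • x = 0 := by rwa [Nat.cast_smul_eq_nsmul]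
  set w := B.repr x with hw
  have hcoef : ∀ i, (c : ZMod n) * w i = 0 := by
    intro i
    have : B.repr ((c : ZMod n) • x) = 0 := by rw [h', map_zero]
    have := congrArg (fun g => g i) this
    simpa [smul_eq_mul] using this
  set g : ZMod n → ZMod n := fun a => ((a.val / d : ℕ) : ZMod n) with hg
  have hg0 : g 0 = 0 := by simp [hg]
  refine ⟨B.repr.symm (w.mapRange g hg0), ?_⟩
  apply B.repr.injective
  rw [map_nsmul, LinearEquiv.apply_symm_apply]
  ext i
  obtain ⟨b, hb⟩ := zmod_exists_of_mul_eq_zero hn hc (w i) (hcoef i)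
  have hval : ((w i).val : ZMod n) = w i := ZMod.natCast_zmod_val _
  have h2 : ((c * (w i).val : ℕ) : ZMod n) = 0 := by push_cast [hval]; exact hcoef i
  rw [ZMod.natCast_eq_zero_iff] at h2
  have h3 : c * d ∣ c * (w i).val := by rw [← hn]; exact h2
  have hd : d ∣ (w i).val := (mul_dvd_mul_iff_left hc.ne').mp h3
  have : (d : ZMod n) * g (w i) = w i := by
    rw [hg]
    rw [← Nat.cast_mul, Nat.mul_div_cancel' hd, hval]
  simp only [Finsupp.coe_smul, Pi.smul_apply, Finsupp.mapRange_apply]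
  rw [← Nat.cast_smul_eq_nsmul (ZMod n), smul_eq_mul, this]

open TensorAlgebra in
/-- Let `R = ℤ/p^s` and let `f : T(A) → T(B)` be an `R`-linear map between tensor algebras,
with `A` free. Suppose that for every `k` and every `x` in the weight-`k` component of
`T(A)`: (i) `p^(s-1) • π_j (f x) = 0` for all `j < k`, and (ii) `x ↦ π_k (f x)` is
injective on the weight-`k` component. Then `f` is injective. -/
theorem tensorAlgebra_map_injective_of_leading_terms (p : ℕ) (hp : p.Prime) (s : ℕ)
    (hs : 1 ≤ s) (A B : Type) [AddCommGroup A] [AddCommGroup B]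
    [Module (ZMod (p ^ s)) A] [Module (ZMod (p ^ s)) B]
    [Module.Free (ZMod (p ^ s)) A]
    (f : TensorAlgebra (ZMod (p ^ s)) A →ₗ[ZMod (p ^ s)] TensorAlgebra (ZMod (p ^ s)) B)
    (hi : ∀ k : ℕ, ∀ x ∈ (LinearMap.range
        (ι (ZMod (p ^ s)) : A →ₗ[ZMod (p ^ s)] TensorAlgebra (ZMod (p ^ s)) A) ^ k),
      ∀ j < k, p ^ (s - 1) • GradedAlgebra.proj
        ((LinearMap.range (ι (ZMod (p ^ s)) :
          B →ₗ[ZMod (p ^ s)] TensorAlgebra (ZMod (p ^ s)) B) ^ ·) : ℕ → Submodule _ _) j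
        (f x) = 0)
    (hii : ∀ k : ℕ, Set.InjOn
      (fun x => GradedAlgebra.proj
        ((LinearMap.range (ι (ZMod (p ^ s)) :
          B →ₗ[ZMod (p ^ s)] TensorAlgebra (ZMod (p ^ s)) B) ^ ·) : ℕ → Submodule _ _) k
        (f x))
      ((LinearMap.range (ι (ZMod (p ^ s)) :
          A →ₗ[ZMod (p ^ s)] TensorAlgebra (ZMod (p ^ s)) A) ^ k : Submodule _ _) : Set _)) :
    Function.Injective f := by
  classical
  haveI : NeZero (p ^ s) := ⟨pow_ne_zero _ hp.pos.ne'⟩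
  set R := ZMod (p ^ s)
  set 𝒜 : ℕ → Submodule R (TensorAlgebra R A) :=
    ((LinearMap.range (ι R : A →ₗ[R] TensorAlgebra R A) ^ ·)) with h𝒜
  set ℬ : ℕ → Submodule R (TensorAlgebra R B) :=
    ((LinearMap.range (ι R : B →ₗ[R] TensorAlgebra R B) ^ ·)) with hℬ
  suffices hker : ∀ x, f x = 0 → x = 0 by
    intro a b hab
    have : f (a - b) = 0 := by rw [map_sub, hab, sub_self]
    have := hker _ this
    rwa [sub_eq_zero] at this
  have claim : ∀ u, u ≤ s → ∀ x, f x = 0 → p ^ (s - u) • x = 0 := by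
    intro u
    induction u with
    | zero =>
      intro _ x _
      rw [Nat.sub_zero, ← Nat.cast_smul_eq_nsmul R, ZMod.natCast_self, zero_smul]
    | succ u ih =>
      intro hu x hfx
      have hux : p ^ (s - u) • x = 0 := ih (Nat.le_of_succ_le hu) x hfx
      obtain ⟨z, hz⟩ := free_exists_of_smul_eq_zero
        (n := p ^ s) (c := p ^ (s - u)) (d := p ^ u)
        (by rw [← pow_add]; congr 1; omega) (pow_pos hp.pos _) x hux
      set y := p ^ (s - (u + 1)) • x with hy
      have hyz : y = p ^ (s - 1) • z := by
        rw [hy, hz, smul_smul, ← pow_add]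
        congr 2
        omega
      suffices hy0 : y = 0 by rwa [hy] at hy0
      by_contra hy0
      have hfy : f y = 0 := by rw [hy, map_nsmul, hfx, smul_zero]
      have hsupp : (DirectSum.decompose 𝒜 y).support.Nonempty := by
        rw [Finset.nonempty_iff_ne_empty]
        intro hemp
        apply hy0
        conv_lhs => rw [← DirectSum.sum_support_decompose 𝒜 y]
        rw [hemp, Finset.sum_empty]
      set K := (DirectSum.decompose 𝒜 y).support.min' hsupp with hK
      have hKmem : K ∈ (DirectSum.decompose 𝒜 y).support := Finset.min'_mem _ _
      have hterm : ∀ k ∈ (DirectSum.decompose 𝒜 y).support, k ≠ K →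
          GradedAlgebra.proj ℬ K (f (DirectSum.decompose 𝒜 y k)) = 0 := by
        intro k hk hkK
        have hKk : K < k := lt_of_le_of_ne (Finset.min'_le _ _ hk) (Ne.symm hkK)
        have hdec : (DirectSum.decompose 𝒜 y k : TensorAlgebra R A)
            = ((p ^ (s - 1) : ℕ) : R) • (DirectSum.decompose 𝒜 z k : TensorAlgebra R A) := by
          rw [hyz, ← Nat.cast_smul_eq_nsmul R, DirectSum.decompose_smul,
            DirectSum.smul_apply, Submodule.coe_smul]
        have h1 := hi k _ (DirectSum.decompose 𝒜 z k).2 K hKk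
        rw [← Nat.cast_smul_eq_nsmul R] at h1
        rw [hdec, map_smul, map_smul]
        exact h1
      have hsum : ∑ k ∈ (DirectSum.decompose 𝒜 y).support,
          GradedAlgebra.proj ℬ K (f (DirectSum.decompose 𝒜 y k)) = 0 := by
        rw [← map_sum, ← map_sum]
        rw [DirectSum.sum_support_decompose 𝒜 y, hfy, map_zero]
      rw [Finset.sum_eq_single_of_mem K hKmem hterm] at hsum
      have hzeroK : (DirectSum.decompose 𝒜 y K : TensorAlgebra R A) = 0 := by
        refine hii K (DirectSum.decompose 𝒜 y K).2 (Submodule.zero_mem (𝒜 K)) ?_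
        simp only [map_zero]
        exact hsum
      apply DFinsupp.mem_support_iff.mp hKmem
      ext
      exact hzeroK
  have := claim s le_rfl
  intro x hfx
  simpa using this x hfx
end
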